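/- The zeroth and first Legendre coefficients of the regularized fundamental solution G^ρ(Δ_S;·,·) are Ĝ^ρ_0 = ρ/4 and Ĝ^ρ_1 = −1/2 + ρ/4 − ρ²/24. -/

import Mathlib

open Real

/-- Zonal profile `g^ρ(t)` of the regularized fundamental solution `G^ρ(Δ_S;x,y)`
(with `t = x·y`). -/
noncomputable def grhoProfile (ρ t : ℝ) : ℝ :=
  if t ≤ 1 - ρ then (1 / (4 * π)) * Real.log (1 - t) + (1 / (4 * π)) * (1 - Real.log 2)
  else (1 - t) / (4 * π * ρ) + (1 / (4 * π)) * (Real.log ρ - Real.log 2)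

/-- The zeroth and first Legendre coefficients
`Ĝ^ρ_n = 2π ∫_{−1}^{1} g^ρ(t) P_n(t) dt` of the regularized fundamental solution are
`Ĝ^ρ_0 = ρ/4` and `Ĝ^ρ_1 = −1/2 + ρ/4 − ρ²/24` (with `P_0(t) = 1`, `P_1(t) = t`). -/
theorem regularized_green_low_coeffs (ρ : ℝ) (hρ : ρ ∈ Set.Ioo (0:ℝ) 2) :
    2 * π * ∫ t in (-1:ℝ)..1, grhoProfile ρ t = ρ / 4 ∧
    2 * π * ∫ t in (-1:ℝ)..1, grhoProfile ρ t * t = -1/2 + ρ / 4 - ρ ^ 2 / 24 := by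
  obtain ⟨h0, h2⟩ := hρ
  have hπ : (0:ℝ) < π := Real.pi_pos
  have hπ' : π ≠ 0 := hπ.ne'
  have hρ0 : ρ ≠ 0 := ne_of_gt h0
  set a : ℝ := 1 / (4 * π) with ha
  set b : ℝ := 1 / (4 * π) * (1 - Real.log 2) with hb
  set d : ℝ := 1 / (4 * π) * (Real.log ρ - Real.log 2) with hd
  set f1 : ℝ → ℝ := fun t => a * Real.log (1 - t) + b with hf1
  set f2 : ℝ → ℝ := fun t => (1 - t) / (4 * π * ρ) + d with hf2
  have hle1 : (-1:ℝ) ≤ 1 - ρ := by linarith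
  have hle2 : 1 - ρ ≤ 1 := by linarith
  -- the profile agrees with explicit formulas on each piece
  have e1 : Set.EqOn (grhoProfile ρ) f1 (Set.uIcc (-1) (1 - ρ)) := by
    intro t ht
    rw [Set.uIcc_of_le hle1] at ht
    simp only [grhoProfile, if_pos ht.2, hf1]
    rfl
  have e2 : Set.EqOn (grhoProfile ρ) f2 (Set.uIcc (1 - ρ) 1) := by
    intro t ht
    rw [Set.uIcc_of_le hle2] at ht
    simp only [grhoProfile, hf2, hd]
    split_ifs with h
    · have htq : t = 1 - ρ := le_antisymm h ht.1
      subst htq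
      have hq : (1:ℝ) - (1 - ρ) = ρ := by ring
      rw [hq]
      field_simp
      ring
    · rfl
  -- continuity of the explicit formulas on the pieces
  have c1 : ContinuousOn f1 (Set.uIcc (-1) (1 - ρ)) := by
    apply ContinuousOn.add _ continuousOn_const
    apply ContinuousOn.mul continuousOn_const
    apply Real.continuousOn_log.comp ((continuous_const.sub continuous_id).continuousOn)
    intro t ht
    rw [Set.uIcc_of_le hle1] at ht
    have : (0:ℝ) < 1 - t := by
      have := ht.2; linarith
    simp only [Set.mem_compl_iff, Set.mem_singleton_iff]
    exact ne_of_gt this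
  have c2 : ContinuousOn f2 (Set.uIcc (1 - ρ) 1) :=
    (((continuous_const.sub continuous_id).div_const _).add continuous_const).continuousOn
  have c1t : ContinuousOn (fun t => f1 t * t) (Set.uIcc (-1) (1 - ρ)) :=
    c1.mul continuousOn_id
  have c2t : ContinuousOn (fun t => f2 t * t) (Set.uIcc (1 - ρ) 1) :=
    c2.mul continuousOn_id
  -- interval integrability of the profile (and profile * t) on each piece
  have i1 : IntervalIntegrable (grhoProfile ρ) MeasureTheory.volume (-1) (1 - ρ) :=
    (c1.congr e1).intervalIntegrable
  have i2 : IntervalIntegrable (grhoProfile ρ) MeasureTheory.volume (1 - ρ) 1 :=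
    (c2.congr e2).intervalIntegrable
  have i1t : IntervalIntegrable (fun t => grhoProfile ρ t * t) MeasureTheory.volume (-1) (1 - ρ) :=
    (c1t.congr (fun t ht => by rw [e1 ht])).intervalIntegrable
  have i2t : IntervalIntegrable (fun t => grhoProfile ρ t * t) MeasureTheory.volume (1 - ρ) 1 :=
    (c2t.congr (fun t ht => by rw [e2 ht])).intervalIntegrable
  -- FTC computations
  have hF1 : ∀ t ∈ Set.uIcc (-1:ℝ) (1 - ρ),
      HasDerivAt (fun t => a * (-((1 - t) * Real.log (1 - t)) + (1 - t)) + b * t) (f1 t) t := by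
    intro t ht
    rw [Set.uIcc_of_le hle1] at ht
    have hpos : (0:ℝ) < 1 - t := by linarith [ht.2]
    have h1 : HasDerivAt (fun t : ℝ => 1 - t) (-1) t := by
      simpa using (hasDerivAt_id t).const_sub 1
    have hlog : HasDerivAt (fun t => Real.log (1 - t)) ((1 - t)⁻¹ * (-1)) t :=
      (Real.hasDerivAt_log hpos.ne').comp t h1
    have h3 := ((h1.mul hlog).neg.add h1).const_mul a
    have h4 := h3.add ((hasDerivAt_id t).const_mul b)
    refine h4.congr_deriv ?_
    simp only [hf1]
    field_simp
    ring
  have hG1 : ∀ t ∈ Set.uIcc (1 - ρ : ℝ) 1,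
      HasDerivAt (fun t => -((1 - t) ^ 2) / (8 * π * ρ) + d * t) (f2 t) t := by
    intro t _
    have h1 : HasDerivAt (fun t : ℝ => 1 - t) (-1) t := by
      simpa using (hasDerivAt_id t).const_sub 1
    have h3 := (((h1.pow 2).neg.div_const (8 * π * ρ)).add ((hasDerivAt_id t).const_mul d))
    refine h3.congr_deriv ?_
    simp only [hf2]
    field_simp
    ring
  have hF1t : ∀ t ∈ Set.uIcc (-1:ℝ) (1 - ρ),
      HasDerivAt (fun t => a * ((t ^ 2 - 1) / 2 * Real.log (1 - t) - t / 2 - t ^ 2 / 4)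
        + b * (t ^ 2 / 2)) (f1 t * t) t := by
    intro t ht
    rw [Set.uIcc_of_le hle1] at ht
    have hpos : (0:ℝ) < 1 - t := by linarith [ht.2]
    have hne : (1:ℝ) - t ≠ 0 := ne_of_gt hpos
    have h1 : HasDerivAt (fun t : ℝ => 1 - t) (-1) t := by
      simpa using (hasDerivAt_id t).const_sub 1
    have hlog : HasDerivAt (fun t => Real.log (1 - t)) ((1 - t)⁻¹ * (-1)) t :=
      (Real.hasDerivAt_log hpos.ne').comp t h1
    have hq : HasDerivAt (fun t : ℝ => (t ^ 2 - 1) / 2) ((2 * t ^ 1) / 2) t :=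
      ((hasDerivAt_pow 2 t).sub_const 1).div_const 2
    have hmul := hq.mul hlog
    have hsub := (hmul.sub ((hasDerivAt_id t).div_const 2)).sub
      ((hasDerivAt_pow 2 t).div_const 4)
    have hall := (hsub.const_mul a).add (((hasDerivAt_pow 2 t).div_const 2).const_mul b)
    refine hall.congr_deriv ?_
    simp only [hf1]
    field_simp
    ring
  have hG1t : ∀ t ∈ Set.uIcc (1 - ρ : ℝ) 1,
      HasDerivAt (fun t => (t ^ 2 / 2 - t ^ 3 / 3) / (4 * π * ρ) + d * (t ^ 2 / 2))
        (f2 t * t) t := by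
    intro t _
    have hq := (((hasDerivAt_pow 2 t).div_const 2).sub
      ((hasDerivAt_pow 3 t).div_const 3)).div_const (4 * π * ρ)
    have hall := hq.add (((hasDerivAt_pow 2 t).div_const 2).const_mul d)
    refine hall.congr_deriv ?_
    simp only [hf2]
    field_simp
    ring
  -- the four piece integrals
  have I1 : ∫ t in (-1:ℝ)..(1 - ρ), grhoProfile ρ t
      = (a * (-((1 - (1 - ρ)) * Real.log (1 - (1 - ρ))) + (1 - (1 - ρ))) + b * (1 - ρ))
        - (a * (-((1 - (-1:ℝ)) * Real.log (1 - (-1:ℝ))) + (1 - (-1:ℝ))) + b * (-1)) := by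
    rw [intervalIntegral.integral_congr e1]
    exact intervalIntegral.integral_eq_sub_of_hasDerivAt hF1 (c1.intervalIntegrable)
  have I2 : ∫ t in (1 - ρ : ℝ)..1, grhoProfile ρ t
      = (-((1 - (1:ℝ)) ^ 2) / (8 * π * ρ) + d * 1)
        - (-((1 - (1 - ρ)) ^ 2) / (8 * π * ρ) + d * (1 - ρ)) := by
    rw [intervalIntegral.integral_congr e2]
    exact intervalIntegral.integral_eq_sub_of_hasDerivAt hG1 (c2.intervalIntegrable)
  have I1t : ∫ t in (-1:ℝ)..(1 - ρ), grhoProfile ρ t * t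
      = (a * (((1 - ρ) ^ 2 - 1) / 2 * Real.log (1 - (1 - ρ)) - (1 - ρ) / 2 - (1 - ρ) ^ 2 / 4)
          + b * ((1 - ρ) ^ 2 / 2))
        - (a * (((-1:ℝ) ^ 2 - 1) / 2 * Real.log (1 - (-1:ℝ)) - (-1:ℝ) / 2 - (-1:ℝ) ^ 2 / 4)
          + b * ((-1:ℝ) ^ 2 / 2)) := by
    rw [intervalIntegral.integral_congr (fun t ht => by rw [e1 ht])]
    exact intervalIntegral.integral_eq_sub_of_hasDerivAt hF1t (c1t.intervalIntegrable)
  have I2t : ∫ t in (1 - ρ : ℝ)..1, grhoProfile ρ t * t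
      = (((1:ℝ) ^ 2 / 2 - (1:ℝ) ^ 3 / 3) / (4 * π * ρ) + d * ((1:ℝ) ^ 2 / 2))
        - (((1 - ρ) ^ 2 / 2 - (1 - ρ) ^ 3 / 3) / (4 * π * ρ) + d * ((1 - ρ) ^ 2 / 2)) := by
    rw [intervalIntegral.integral_congr (fun t ht => by rw [e2 ht])]
    exact intervalIntegral.integral_eq_sub_of_hasDerivAt hG1t (c2t.intervalIntegrable)
  have hlog1 : Real.log (1 - (1 - ρ)) = Real.log ρ := by norm_num
  have hlog2 : Real.log (1 - (-1:ℝ)) = Real.log 2 := by norm_num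
  constructor
  · rw [← intervalIntegral.integral_add_adjacent_intervals i1 i2, I1, I2, hlog1, hlog2,
      ha, hb, hd]
    field_simp
    ring
  · rw [← intervalIntegral.integral_add_adjacent_intervals i1t i2t, I1t, I2t, hlog1, hlog2,
      ha, hb, hd]
    field_simp
    ring
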